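/- Let A and B be strongly commuting closed operators on a Hilbert space with right bounding projections {q_s} for A and {f_t} for B. Then for any vector ξ in D(A*A) ∩ D(B*B), the double limit lim_{s,t→∞} A q_s B f_t ξ exists and equals lim_{s,t→∞} B f_t A q_s ξ. -/

import Mathlib

open Filter Topology

variable {H : Type*} [NormedAddCommGroup H] [InnerProductSpace ℂ H] [CompleteSpace H]

/-- A (typically closed, densely defined) operator `A` is affiliated with the von Neumann
algebra `M` if every unitary in the commutant of `M` leaves the domain of `A` invariant and
commutes with `A`. -/
def Affiliated (M : VonNeumannAlgebra H) (A : H →ₗ.[ℂ] H) : Prop :=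
  ∀ u : H →L[ℂ] H, u ∈ M.commutant → u ∈ unitary (H →L[ℂ] H) →
    (∀ ξ : H, ξ ∈ A.domain → u ξ ∈ A.domain) ∧
    ∀ (ξ : A.domain) (h : u ↑ξ ∈ A.domain), A ⟨u ↑ξ, h⟩ = u (A ξ)

/-- Two operators commute strongly if the von Neumann algebras they generate commute;
equivalently, there exist commuting von Neumann algebras `M`, `N` with `A` affiliated
with `M` and `B` affiliated with `N`. -/
def StronglyCommutes (A B : H →ₗ.[ℂ] H) : Prop :=
  ∃ M N : VonNeumannAlgebra H,
    (∀ x ∈ M, ∀ y ∈ N, Commute x y) ∧ Affiliated M A ∧ Affiliated N B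


/-- An abstract family of "right bounding projections" `q t = χ_{[0,t]}(|A|)` of a closed
operator `A = U|A|`: orthogonal projections, increasing, converging strongly to `1`, taking
values in `D(A)` with `A ∘ q t` bounded, lying in every von Neumann algebra with which `A` is
affiliated, and compatible with `A*A` (namely `A q_t η ∈ D(A*)` and
`A* A q_t η = q_t A* A η` whenever `η ∈ D(A*A)`). -/
structure IsRightBoundingFamily (A : H →ₗ.[ℂ] H) (q : ℝ → H →L[ℂ] H) : Prop where
  proj : ∀ t, IsIdempotentElem (q t) ∧ IsSelfAdjoint (q t)
  mono : ∀ s t, s ≤ t → q s * q t = q s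
  tendsto_one : ∀ ξ : H, Tendsto (fun t => q t ξ) atTop (nhds ξ)
  mem_domain : ∀ (t : ℝ) (ξ : H), q t ξ ∈ A.domain
  bounded : ∀ t, ∃ C, ∀ ξ : H, ‖A ⟨q t ξ, mem_domain t ξ⟩‖ ≤ C * ‖ξ‖
  mem_vN : ∀ M : VonNeumannAlgebra H, Affiliated M A → ∀ t, q t ∈ M
  compat : ∀ (t : ℝ) (ξ : H) (hξ : ξ ∈ A.domain) (hξ' : A ⟨ξ, hξ⟩ ∈ A.adjoint.domain),
    ∃ h : A ⟨q t ξ, mem_domain t ξ⟩ ∈ A.adjoint.domain,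
      A.adjoint ⟨A ⟨q t ξ, mem_domain t ξ⟩, h⟩ = q t (A.adjoint ⟨A ⟨ξ, hξ⟩, hξ'⟩)


open NormedSpace LinearPMap

set_option linter.unusedSectionVars false

local notation "⟪" x ", " y "⟫" => @inner ℂ _ _ x y

theorem s4_proj_norm_le {p : H →L[ℂ] H} (hp : IsIdempotentElem p) (hsa : IsSelfAdjoint p)
    (v : H) : ‖p v‖ ≤ ‖v‖ := by
  have h1 : ⟪p v, p v⟫ = ⟪v, p (p v)⟫ := by
    rw [← ContinuousLinearMap.adjoint_inner_right]
    rw [← ContinuousLinearMap.star_eq_adjoint, hsa.star_eq]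
  have h2 : p (p v) = p v := by
    have := congrFun (congrArg DFunLike.coe hp.eq) v
    simpa [ContinuousLinearMap.mul_apply] using this
  have h3 : ‖p v‖ ^ 2 ≤ ‖v‖ * ‖p v‖ := by
    have h4 : (‖p v‖ : ℝ) ^ 2 = RCLike.re ⟪p v, p v⟫ := by
      rw [@inner_self_eq_norm_sq ℂ]
    rw [h4, h1, h2]
    exact re_inner_le_norm (𝕜 := ℂ) v (p v)
  nlinarith [norm_nonneg (p v), norm_nonneg v]

theorem s4_centralizer_isClosed (S : Set (H →L[ℂ] H)) : IsClosed (Set.centralizer S) := by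
  have : Set.centralizer S = ⋂ m ∈ S, {x : H →L[ℂ] H | m * x = x * m} := by
    ext x
    simp only [Set.mem_centralizer_iff, Set.mem_iInter, Set.mem_setOf_eq]
  rw [this]
  exact isClosed_biInter fun m _ => isClosed_eq (continuous_const.mul continuous_id)
    (continuous_id.mul continuous_const)

theorem s4_vN_isClosed (P : VonNeumannAlgebra H) : IsClosed (P : Set (H →L[ℂ] H)) := by
  rw [← P.centralizer_centralizer]
  exact s4_centralizer_isClosed _

theorem s4_exp_mem (P : VonNeumannAlgebra H) {x : H →L[ℂ] H} (hx : x ∈ P) :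
    exp x ∈ P := by
  have hclosed := s4_vN_isClosed P
  have hsum := (NormedSpace.expSeries_summable' (𝕂 := ℝ) x).hasSum
  rw [exp_eq_tsum (𝕂 := ℝ)]
  refine hclosed.mem_of_tendsto hsum.tendsto_sum_nat (Filter.Eventually.of_forall fun n => ?_)
  refine sum_mem fun i _ => ?_
  have h5 : (i.factorial⁻¹ : ℝ) • x ^ i = ((i.factorial⁻¹ : ℝ) : ℂ) • x ^ i := by
    rw [← algebraMap_smul ℂ ((i.factorial⁻¹ : ℝ)) (x ^ i)]
    norm_num
  rw [h5]
  exact P.toStarSubalgebra.smul_mem (pow_mem hx i) _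

theorem s4_exp_skew_unitary {c : H →L[ℂ] H} (hstar : star c = -c) :
    exp c ∈ unitary (H →L[ℂ] H) := by
  have hcom : Commute (-c) c := (Commute.refl c).neg_left
  constructor
  · rw [star_exp, hstar, ← exp_add_of_commute_of_mem_ball (𝕂 := ℝ) hcom
      ((expSeries_radius_eq_top ℝ (H →L[ℂ] H)).symm ▸ edist_lt_top _ _)
      ((expSeries_radius_eq_top ℝ (H →L[ℂ] H)).symm ▸ edist_lt_top _ _)]
    simp [exp_zero]
  · rw [star_exp, hstar, ← exp_add_of_commute_of_mem_ball (𝕂 := ℝ) hcom.symm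
      ((expSeries_radius_eq_top ℝ (H →L[ℂ] H)).symm ▸ edist_lt_top _ _)
      ((expSeries_radius_eq_top ℝ (H →L[ℂ] H)).symm ▸ edist_lt_top _ _)]
    simp [exp_zero]

theorem s4_hasDerivAt_exp_zero (c : H →L[ℂ] H) :
    HasDerivAt (fun r : ℝ => exp (r • c)) c 0 := by
  simpa using hasDerivAt_exp_smul_const (𝕂 := ℝ) c 0

theorem s4_real_smul_eq (a : H →L[ℂ] H) (r : ℝ) :
    r • (Complex.I • a) = ((r : ℂ) * Complex.I) • a := by
  rw [mul_smul, ← Complex.coe_algebraMap, algebraMap_smul]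

theorem s4_commute_of_commute_unitary (P : VonNeumannAlgebra H) (T : H →L[ℂ] H)
    (h : ∀ u ∈ P, u ∈ unitary (H →L[ℂ] H) → Commute T u) :
    ∀ x ∈ P, Commute T x := by
  have key : ∀ a ∈ P, IsSelfAdjoint a → Commute T a := by
    intro a haP hsa
    set c := Complex.I • a with hc
    have hmem : ∀ r : ℝ, r • c ∈ P := by
      intro r
      rw [hc, s4_real_smul_eq]
      exact P.toStarSubalgebra.smul_mem haP _
    have hstar : ∀ r : ℝ, star (r • c) = -(r • c) := by
      intro r
      rw [hc, s4_real_smul_eq, star_smul, hsa.star_eq]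
      simp [Complex.star_def, Complex.conj_I]
    have hu : ∀ r : ℝ, Commute T (exp (r • c)) := fun r =>
      h _ (s4_exp_mem P (hmem r)) (s4_exp_skew_unitary (hstar r))
    have hder := s4_hasDerivAt_exp_zero c
    have h1 : HasDerivAt (fun r : ℝ => T * exp (r • c)) (T * c) 0 := hder.const_mul T
    have h2 : HasDerivAt (fun r : ℝ => exp (r • c) * T) (c * T) 0 := hder.mul_const T
    have heq : (fun r : ℝ => exp (r • c) * T) = fun r : ℝ => T * exp (r • c) :=
      funext fun r => ((hu r).eq).symm
    rw [heq] at h2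
    have hTc : T * c = c * T := h1.unique h2
    have hI : Complex.I • (T * a) = Complex.I • (a * T) := by
      calc Complex.I • (T * a) = T * c := by rw [hc, mul_smul_comm]
      _ = c * T := hTc
      _ = Complex.I • (a * T) := by rw [hc, smul_mul_assoc]
    exact smul_right_injective _ Complex.I_ne_zero hI
  intro x hx
  set a := (2 : ℂ)⁻¹ • (x + star x) with ha
  set b := -((2 : ℂ)⁻¹ • (Complex.I • (x - star x))) with hbdef
  have hIb : Complex.I • b = (2 : ℂ)⁻¹ • (x - star x) := by
    have hcc : Complex.I * 2⁻¹ * Complex.I = -(2:ℂ)⁻¹ := by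
      rw [mul_comm Complex.I (2⁻¹:ℂ), mul_assoc, Complex.I_mul_I]; ring
    rw [hbdef, smul_neg, smul_smul, smul_smul, hcc, neg_smul, neg_neg]
  have hxa : x = a + Complex.I • b := by
    rw [hIb, ha]; module
  have haP : a ∈ P := P.toStarSubalgebra.smul_mem (add_mem hx (star_mem hx)) _
  have hbP : b ∈ P := neg_mem (P.toStarSubalgebra.smul_mem
    (P.toStarSubalgebra.smul_mem (sub_mem hx (star_mem hx)) _) _)
  have hsa : IsSelfAdjoint a := by
    rw [IsSelfAdjoint, ha]
    simp only [star_smul, star_add, star_star, Complex.star_def, map_inv₀, Complex.conj_ofNat]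
    module
  have hsb : IsSelfAdjoint b := by
    rw [IsSelfAdjoint, hbdef]
    simp only [star_neg, star_smul, star_sub, star_star, Complex.star_def, map_inv₀,
      Complex.conj_ofNat, Complex.conj_I]
    module
  have h1 := key a haP hsa
  have h2 := key b hbP hsb
  rw [hxa]
  exact h1.add_right (h2.smul_right Complex.I)

theorem s4_pmap_apply_congr {B : H →ₗ.[ℂ] H} {x y : H} {hx : x ∈ B.domain} {hy : y ∈ B.domain}
    (h : x = y) : B ⟨x, hx⟩ = B ⟨y, hy⟩ := by
  cases h; rfl

theorem s4_pmap_smul {B : H →ₗ.[ℂ] H} {v w : H} (k : ℂ) (hv : v ∈ B.domain)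
    (hw : B ⟨v, hv⟩ = w) : ∃ h : k • v ∈ B.domain, B ⟨k • v, h⟩ = k • w := by
  refine ⟨B.domain.smul_mem k hv, ?_⟩
  have h1 : B ⟨k • v, B.domain.smul_mem k hv⟩ = B (k • (⟨v, hv⟩ : B.domain)) :=
    s4_pmap_apply_congr rfl
  rw [h1, B.map_smul, hw]

theorem s4_pmap_add {B : H →ₗ.[ℂ] H} {v v' w w' : H} (hv : v ∈ B.domain) (hv' : v' ∈ B.domain)
    (hw : B ⟨v, hv⟩ = w) (hw' : B ⟨v', hv'⟩ = w') :
    ∃ h : v + v' ∈ B.domain, B ⟨v + v', h⟩ = w + w' := by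
  refine ⟨B.domain.add_mem hv hv', ?_⟩
  have h1 : B ⟨v + v', B.domain.add_mem hv hv'⟩ = B ((⟨v, hv⟩ : B.domain) + ⟨v', hv'⟩) :=
    s4_pmap_apply_congr rfl
  rw [h1, B.map_add, hw, hw']

theorem s4_pmap_sub {B : H →ₗ.[ℂ] H} {v v' w w' : H} (hv : v ∈ B.domain) (hv' : v' ∈ B.domain)
    (hw : B ⟨v, hv⟩ = w) (hw' : B ⟨v', hv'⟩ = w') :
    ∃ h : v - v' ∈ B.domain, B ⟨v - v', h⟩ = w - w' := by
  refine ⟨B.domain.sub_mem hv hv', ?_⟩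
  have h1 : B ⟨v - v', B.domain.sub_mem hv hv'⟩ = B ((⟨v, hv⟩ : B.domain) - ⟨v', hv'⟩) :=
    s4_pmap_apply_congr rfl
  rw [h1, B.map_sub, hw, hw']

theorem s4_real_smul_eq_complex (r : ℝ) (v : H) : r • v = ((r : ℂ)) • v := by
  rw [← Complex.coe_algebraMap, algebraMap_smul]

theorem s4_pmap_comm_of_unitary_comm (P : VonNeumannAlgebra H) (B : H →ₗ.[ℂ] H)
    (hBc : B.IsClosed)
    (hu : ∀ u : H →L[ℂ] H, u ∈ P → u ∈ unitary (H →L[ℂ] H) →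
      ∀ ζ (hζ : ζ ∈ B.domain), ∃ h : u ζ ∈ B.domain, B ⟨u ζ, h⟩ = u (B ⟨ζ, hζ⟩)) :
    ∀ x : H →L[ℂ] H, x ∈ P → ∀ ζ (hζ : ζ ∈ B.domain),
      ∃ h : x ζ ∈ B.domain, B ⟨x ζ, h⟩ = x (B ⟨ζ, hζ⟩) := by
  have key : ∀ a, a ∈ P → IsSelfAdjoint a → ∀ ζ (hζ : ζ ∈ B.domain),
      ∃ h : a ζ ∈ B.domain, B ⟨a ζ, h⟩ = a (B ⟨ζ, hζ⟩) := by
    intro a haP hsa ζ hζ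
    set c := Complex.I • a with hc
    have hmem : ∀ r : ℝ, r • c ∈ P := by
      intro r
      rw [hc, s4_real_smul_eq]
      exact P.toStarSubalgebra.smul_mem haP _
    have hstar : ∀ r : ℝ, star (r • c) = -(r • c) := by
      intro r
      rw [hc, s4_real_smul_eq, star_smul, hsa.star_eq]
      simp [Complex.star_def, Complex.conj_I]
    have hcu : ∀ r : ℝ, ∀ ζ' (hζ' : ζ' ∈ B.domain), ∃ h : exp (r • c) ζ' ∈ B.domain,
        B ⟨exp (r • c) ζ', h⟩ = exp (r • c) (B ⟨ζ', hζ'⟩) := fun r =>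
      hu _ (s4_exp_mem P (hmem r)) (s4_exp_skew_unitary (hstar r))
    set g : ℝ → H →L[ℂ] H := fun r => exp (r • c) with hg
    have hslope : Tendsto (slope g 0) (𝓝[≠] (0:ℝ)) (𝓝 c) :=
      hasDerivAt_iff_tendsto_slope.mp (s4_hasDerivAt_exp_zero c)
    have happly : ∀ v : H, Tendsto (fun r => (slope g 0 r) v) (𝓝[≠] (0:ℝ)) (𝓝 (c v)) := by
      intro v
      have hcont : Continuous fun T : H →L[ℂ] H => T v :=
        (ContinuousLinearMap.apply ℂ H v).continuous
      exact (hcont.tendsto c).comp hslope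
    have hval : ∀ r : ℝ, ∀ v : H, slope g 0 r v = ((r⁻¹ : ℝ) : ℂ) • (g r v - v) := by
      intro r v
      have : slope g 0 r = (r⁻¹ : ℝ) • (g r - g 0) := by
        rw [slope]; simp [vsub_eq_sub]
      rw [this]
      have hg0 : g 0 = 1 := by simp [hg, exp_zero]
      rw [hg0]
      simp [ContinuousLinearMap.sub_apply, s4_real_smul_eq_complex]
    have hgraph : ∀ r : ℝ, (slope g 0 r ζ, slope g 0 r (B ⟨ζ, hζ⟩)) ∈ B.graph := by
      intro r
      obtain ⟨h1, he1⟩ := hcu r ζ hζ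
      obtain ⟨h2, he2⟩ := s4_pmap_sub h1 hζ he1 rfl
      obtain ⟨h3, he3⟩ := s4_pmap_smul ((r⁻¹ : ℝ) : ℂ) h2 he2
      rw [B.mem_graph_iff]
      exact ⟨⟨_, h3⟩, (hval r ζ).symm, by rw [he3]; exact (hval r _).symm⟩
    have hmemgraph : (c ζ, c (B ⟨ζ, hζ⟩)) ∈ B.graph := by
      have htend : Tendsto (fun r => (slope g 0 r ζ, slope g 0 r (B ⟨ζ, hζ⟩)))
          (𝓝[≠] (0:ℝ)) (𝓝 (c ζ, c (B ⟨ζ, hζ⟩))) :=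
        (happly ζ).prodMk_nhds (happly (B ⟨ζ, hζ⟩))
      exact hBc.mem_of_tendsto htend (Filter.Eventually.of_forall hgraph)
    obtain ⟨y, hy1, hy2⟩ := (B.mem_graph_iff).1 hmemgraph
    have hy1' : (y : H) = c ζ := hy1
    have hy2' : B y = c (B ⟨ζ, hζ⟩) := hy2
    have hcz : c ζ ∈ B.domain := hy1' ▸ y.2
    have hcz2 : B ⟨c ζ, hcz⟩ = c (B ⟨ζ, hζ⟩) := by
      rw [← hy2']; exact s4_pmap_apply_congr hy1'.symm
    have hac : ∀ v : H, a v = (-Complex.I) • (c v) := by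
      intro v
      rw [hc]
      simp [smul_smul, Complex.I_mul_I]
    obtain ⟨h4, he4⟩ := s4_pmap_smul (-Complex.I) hcz hcz2
    have hmem' : a ζ ∈ B.domain := by rw [hac ζ]; exact h4
    refine ⟨hmem', ?_⟩
    calc B ⟨a ζ, hmem'⟩ = B ⟨-Complex.I • c ζ, h4⟩ := s4_pmap_apply_congr (hac ζ)
    _ = -Complex.I • c (B ⟨ζ, hζ⟩) := he4
    _ = a (B ⟨ζ, hζ⟩) := (hac _).symm
  intro x hx ζ hζ
  set a := (2 : ℂ)⁻¹ • (x + star x) with ha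
  set b := -((2 : ℂ)⁻¹ • (Complex.I • (x - star x))) with hbdef
  have hIb : Complex.I • b = (2 : ℂ)⁻¹ • (x - star x) := by
    have hcc : Complex.I * 2⁻¹ * Complex.I = -(2:ℂ)⁻¹ := by
      rw [mul_comm Complex.I (2⁻¹:ℂ), mul_assoc, Complex.I_mul_I]; ring
    rw [hbdef, smul_neg, smul_smul, smul_smul, hcc, neg_smul, neg_neg]
  have hxa : ∀ v : H, x v = a v + Complex.I • (b v) := by
    intro v
    have : x = a + Complex.I • b := by rw [hIb, ha]; module
    rw [this]; simp
  have haP : a ∈ P := P.toStarSubalgebra.smul_mem (add_mem hx (star_mem hx)) _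
  have hbP : b ∈ P := neg_mem (P.toStarSubalgebra.smul_mem
    (P.toStarSubalgebra.smul_mem (sub_mem hx (star_mem hx)) _) _)
  have hsa : IsSelfAdjoint a := by
    rw [IsSelfAdjoint, ha]
    simp only [star_smul, star_add, star_star, Complex.star_def, map_inv₀, Complex.conj_ofNat]
    module
  have hsb : IsSelfAdjoint b := by
    rw [IsSelfAdjoint, hbdef]
    simp only [star_neg, star_smul, star_sub, star_star, Complex.star_def, map_inv₀,
      Complex.conj_ofNat, Complex.conj_I]
    module
  obtain ⟨ham, hae⟩ := key a haP hsa ζ hζ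
  obtain ⟨hbm, hbe⟩ := key b hbP hsb ζ hζ
  obtain ⟨hbm2, hbe2⟩ := s4_pmap_smul Complex.I hbm hbe
  obtain ⟨hm, he⟩ := s4_pmap_add ham hbm2 hae hbe2
  have hmem' : x ζ ∈ B.domain := by rw [hxa ζ]; exact hm
  refine ⟨hmem', ?_⟩
  calc B ⟨x ζ, hmem'⟩ = B ⟨a ζ + Complex.I • b ζ, hm⟩ := s4_pmap_apply_congr (hxa ζ)
  _ = a (B ⟨ζ, hζ⟩) + Complex.I • b (B ⟨ζ, hζ⟩) := he
  _ = x (B ⟨ζ, hζ⟩) := (hxa _).symm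

theorem s4_adjoint_isClosed (B : H →ₗ.[ℂ] H) (hBd : Dense (B.domain : Set H)) :
    B.adjoint.IsClosed := by
  have hgr : (B.adjoint.graph : Set (H × H)) =
      ⋂ x : B.domain, {p : H × H | ⟪p.2, (x : H)⟫ = ⟪p.1, B x⟫} := by
    ext p
    simp only [Set.mem_iInter, Set.mem_setOf_eq, SetLike.mem_coe]
    constructor
    · rintro hp x
      obtain ⟨y, hy1, hy2⟩ := (B.adjoint.mem_graph_iff).1 hp
      have := B.adjoint_isFormalAdjoint hBd y x
      rw [hy2, hy1] at this
      rw [this]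
    · intro hp
      have hm : p.1 ∈ B.adjoint.domain :=
        mem_adjoint_domain_of_exists _ ⟨p.2, fun x => hp x⟩
      have hv : B.adjoint ⟨p.1, hm⟩ = p.2 :=
        adjoint_apply_eq hBd _ fun x => hp x
      rw [B.adjoint.mem_graph_iff]
      exact ⟨⟨p.1, hm⟩, rfl, hv⟩
  rw [LinearPMap.IsClosed, hgr]
  exact isClosed_iInter fun x => isClosed_eq
    ((continuous_snd).inner continuous_const) ((continuous_fst).inner continuous_const)

theorem s4_inner_clm_move {u : H →L[ℂ] H} (a b : H) :
    ⟪u a, b⟫ = ⟪a, star u b⟫ := by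
  rw [ContinuousLinearMap.star_eq_adjoint, ContinuousLinearMap.adjoint_inner_right]

theorem s4_unitary_comm_adjoint {B : H →ₗ.[ℂ] H} (hBd : Dense (B.domain : Set H))
    {u : H →L[ℂ] H}
    (hcomm_us : ∀ ζ (hζ : ζ ∈ B.domain), ∃ h : star u ζ ∈ B.domain,
      B ⟨star u ζ, h⟩ = star u (B ⟨ζ, hζ⟩)) :
    ∀ η (hη : η ∈ B.adjoint.domain), ∃ h : u η ∈ B.adjoint.domain,
      B.adjoint ⟨u η, h⟩ = u (B.adjoint ⟨η, hη⟩) := by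
  intro η hη
  have hkey : ∀ x : B.domain, ⟪u (B.adjoint ⟨η, hη⟩), (x : H)⟫ = ⟪u η, B x⟫ := by
    intro x
    obtain ⟨h1, he1⟩ := hcomm_us x x.2
    calc ⟪u (B.adjoint ⟨η, hη⟩), (x : H)⟫ = ⟪B.adjoint ⟨η, hη⟩, star u x⟫ :=
        s4_inner_clm_move _ _
    _ = ⟪η, B ⟨star u x, h1⟩⟫ := by
        have := B.adjoint_isFormalAdjoint hBd ⟨η, hη⟩ ⟨star u (x : H), h1⟩
        exact this
    _ = ⟪η, star u (B x)⟫ := by rw [he1]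
    _ = ⟪u η, B x⟫ := (s4_inner_clm_move _ _).symm
  have hm : u η ∈ B.adjoint.domain :=
    mem_adjoint_domain_of_exists _ ⟨u (B.adjoint ⟨η, hη⟩), fun x => hkey x⟩
  exact ⟨hm, adjoint_apply_eq hBd _ fun x => hkey x⟩

noncomputable def rbfClm {A : H →ₗ.[ℂ] H} {q : ℝ → H →L[ℂ] H}
    (hq : IsRightBoundingFamily A q) (s : ℝ) : H →L[ℂ] H :=
  LinearMap.mkContinuousOfExistsBound
    { toFun := fun ζ => A ⟨q s ζ, hq.mem_domain s ζ⟩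
      map_add' := fun ζ η => by
        obtain ⟨h, he⟩ := s4_pmap_add (hq.mem_domain s ζ) (hq.mem_domain s η) rfl rfl
        calc A ⟨q s (ζ + η), hq.mem_domain s (ζ + η)⟩ = A ⟨q s ζ + q s η, h⟩ :=
          s4_pmap_apply_congr (map_add (q s) ζ η)
        _ = _ := he
      map_smul' := fun c ζ => by
        obtain ⟨h, he⟩ := s4_pmap_smul c (hq.mem_domain s ζ) rfl
        calc A ⟨q s (c • ζ), hq.mem_domain s (c • ζ)⟩ = A ⟨c • q s ζ, h⟩ :=
          s4_pmap_apply_congr (map_smul (q s) c ζ)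
        _ = _ := he }
    (hq.bounded s)

theorem rbfClm_apply {A : H →ₗ.[ℂ] H} {q : ℝ → H →L[ℂ] H}
    (hq : IsRightBoundingFamily A q) (s : ℝ) (ζ : H) :
    rbfClm hq s ζ = A ⟨q s ζ, hq.mem_domain s ζ⟩ := rfl

theorem rbfClm_star_apply {A : H →ₗ.[ℂ] H} {q : ℝ → H →L[ℂ] H}
    (hq : IsRightBoundingFamily A q) (hAd : Dense (A.domain : Set H)) (s : ℝ)
    (η : H) (hη : η ∈ A.adjoint.domain) :
    star (rbfClm hq s) η = q s (A.adjoint ⟨η, hη⟩) := by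
  apply ext_inner_right ℂ
  intro ζ
  calc ⟪star (rbfClm hq s) η, ζ⟫ = ⟪η, rbfClm hq s ζ⟫ := by
        rw [ContinuousLinearMap.star_eq_adjoint, ContinuousLinearMap.adjoint_inner_left]
  _ = ⟪A.adjoint ⟨η, hη⟩, q s ζ⟫ := by
        rw [rbfClm_apply]
        exact (A.adjoint_isFormalAdjoint hAd ⟨η, hη⟩ ⟨q s ζ, hq.mem_domain s ζ⟩).symm
  _ = ⟪q s (A.adjoint ⟨η, hη⟩), ζ⟫ := by
        rw [s4_inner_clm_move, (hq.proj s).2.star_eq]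

theorem s4_key_bound (A B : H →ₗ.[ℂ] H)
    (hAd : Dense (A.domain : Set H)) (hBd : Dense (B.domain : Set H))
    (q f : ℝ → H →L[ℂ] H) (hq : IsRightBoundingFamily A q) (hf : IsRightBoundingFamily B f)
    (hcomm : ∀ t s, Commute (q s) (rbfClm hf t))
    (hcomm' : ∀ t s, Commute (q s) (star (rbfClm hf t)))
    (CA : ∀ t ζ (hζ : ζ ∈ A.domain), ∃ h : rbfClm hf t ζ ∈ A.domain,
        A ⟨rbfClm hf t ζ, h⟩ = rbfClm hf t (A ⟨ζ, hζ⟩))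
    (CAd : ∀ t ζ (hζ : ζ ∈ A.adjoint.domain), ∃ h : rbfClm hf t ζ ∈ A.adjoint.domain,
        A.adjoint ⟨rbfClm hf t ζ, h⟩ = rbfClm hf t (A.adjoint ⟨ζ, hζ⟩))
    (ξ : H) (hξA : ξ ∈ A.domain) (hξB : ξ ∈ B.domain)
    (hAA : A ⟨ξ, hξA⟩ ∈ A.adjoint.domain) (hBB : B ⟨ξ, hξB⟩ ∈ B.adjoint.domain)
    (s s' t : ℝ) :
    ‖rbfClm hq s' (rbfClm hf t ξ) - rbfClm hq s (rbfClm hf t ξ)‖ ^ 2 ≤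
      2 * ‖B.adjoint ⟨B ⟨ξ, hξB⟩, hBB⟩‖ *
        ‖q s' (A.adjoint ⟨A ⟨ξ, hξA⟩, hAA⟩) - q s (A.adjoint ⟨A ⟨ξ, hξA⟩, hAA⟩)‖ := by
  set S := rbfClm hf t with hS
  set η := S ξ with hη
  set wA := A.adjoint ⟨A ⟨ξ, hξA⟩, hAA⟩ with hwA
  set wB := B.adjoint ⟨B ⟨ξ, hξB⟩, hBB⟩ with hwB
  obtain ⟨hηA, hηAe⟩ := CA t ξ hξA
  obtain ⟨hSA, hSAe⟩ := CAd t (A ⟨ξ, hξA⟩) hAA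
  have hADm : A ⟨η, hηA⟩ ∈ A.adjoint.domain := by rw [hηAe]; exact hSA
  have hADv : A.adjoint ⟨A ⟨η, hηA⟩, hADm⟩ = S wA := by
    calc A.adjoint ⟨A ⟨η, hηA⟩, hADm⟩ = A.adjoint ⟨S (A ⟨ξ, hξA⟩), hSA⟩ :=
      s4_pmap_apply_congr hηAe
    _ = S wA := hSAe
  obtain ⟨hc1, hv1⟩ := hq.compat s η hηA hADm
  obtain ⟨hc2, hv2⟩ := hq.compat s' η hηA hADm
  rw [hADv] at hv1 hv2
  obtain ⟨δm, δv⟩ := s4_pmap_sub (hq.mem_domain s' η) (hq.mem_domain s η)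
    (rfl : A ⟨q s' η, hq.mem_domain s' η⟩ = _) rfl
  obtain ⟨Dm, Dv⟩ := s4_pmap_sub (B := A.adjoint) hc2 hc1 hv2 hv1
  have hfa := A.adjoint_isFormalAdjoint hAd
    ⟨A ⟨q s' η, hq.mem_domain s' η⟩ - A ⟨q s η, hq.mem_domain s η⟩, Dm⟩
    ⟨q s' η - q s η, δm⟩
  have hinner : ⟪A ⟨q s' η, hq.mem_domain s' η⟩ - A ⟨q s η, hq.mem_domain s η⟩,
      A ⟨q s' η, hq.mem_domain s' η⟩ - A ⟨q s η, hq.mem_domain s η⟩⟫ =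
      ⟪q s' (S wA) - q s (S wA), q s' η - q s η⟫ := by
    calc ⟪A ⟨q s' η, hq.mem_domain s' η⟩ - A ⟨q s η, hq.mem_domain s η⟩,
        A ⟨q s' η, hq.mem_domain s' η⟩ - A ⟨q s η, hq.mem_domain s η⟩⟫
        = ⟪A ⟨q s' η, hq.mem_domain s' η⟩ - A ⟨q s η, hq.mem_domain s η⟩,
          A ⟨q s' η - q s η, δm⟩⟫ := by rw [δv]
    _ = ⟪A.adjoint ⟨A ⟨q s' η, hq.mem_domain s' η⟩ - A ⟨q s η, hq.mem_domain s η⟩, Dm⟩,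
          q s' η - q s η⟫ := hfa.symm
    _ = ⟪q s' (S wA) - q s (S wA), q s' η - q s η⟫ := by rw [Dv]
  have hmove : q s' (S wA) - q s (S wA) = S (q s' wA - q s wA) := by
    have h1 : q s' (S wA) = S (q s' wA) := congrFun (congrArg DFunLike.coe (hcomm t s').eq) wA
    have h2 : q s (S wA) = S (q s wA) := congrFun (congrArg DFunLike.coe (hcomm t s).eq) wA
    rw [h1, h2, ← _root_.map_sub]
  obtain ⟨hcB, hvB⟩ := hf.compat t ξ hξB hBB
  have hstarS : star S (S ξ) = f t wB := by
    have h1 : star S (S ξ) = f t (B.adjoint ⟨S ξ, hcB⟩) := rbfClm_star_apply hf hBd t _ hcB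
    rw [h1]
    have h2 : B.adjoint ⟨S ξ, hcB⟩ = f t wB := hvB
    rw [h2]
    exact congrFun (congrArg DFunLike.coe (hf.proj t).1.eq) wB
  have hstar2 : star S (q s' η - q s η) = q s' (f t wB) - q s (f t wB) := by
    rw [_root_.map_sub]
    have h1 : star S (q s' η) = q s' (star S (S ξ)) :=
      (congrFun (congrArg DFunLike.coe (hcomm' t s').eq) (S ξ)).symm
    have h2 : star S (q s η) = q s (star S (S ξ)) :=
      (congrFun (congrArg DFunLike.coe (hcomm' t s).eq) (S ξ)).symm
    rw [h1, h2, hstarS]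
  have hinner2 : ⟪A ⟨q s' η, hq.mem_domain s' η⟩ - A ⟨q s η, hq.mem_domain s η⟩,
      A ⟨q s' η, hq.mem_domain s' η⟩ - A ⟨q s η, hq.mem_domain s η⟩⟫ =
      ⟪q s' wA - q s wA, q s' (f t wB) - q s (f t wB)⟫ := by
    rw [hinner, hmove, s4_inner_clm_move, hstar2]
  have hbound : RCLike.re ⟪A ⟨q s' η, hq.mem_domain s' η⟩ - A ⟨q s η, hq.mem_domain s η⟩,
      A ⟨q s' η, hq.mem_domain s' η⟩ - A ⟨q s η, hq.mem_domain s η⟩⟫ ≤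
      ‖q s' wA - q s wA‖ * (2 * ‖wB‖) := by
    rw [hinner2]
    refine le_trans (re_inner_le_norm (𝕜 := ℂ) _ _) ?_
    refine mul_le_mul_of_nonneg_left ?_ (norm_nonneg _)
    have h1 : ‖q s' (f t wB) - q s (f t wB)‖ ≤ ‖q s' (f t wB)‖ + ‖q s (f t wB)‖ :=
      norm_sub_le _ _
    have h2 : ‖q s' (f t wB)‖ ≤ ‖wB‖ := le_trans
      (s4_proj_norm_le (hq.proj s').1 (hq.proj s').2 _)
      (s4_proj_norm_le (hf.proj t).1 (hf.proj t).2 _)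
    have h3 : ‖q s (f t wB)‖ ≤ ‖wB‖ := le_trans
      (s4_proj_norm_le (hq.proj s).1 (hq.proj s).2 _)
      (s4_proj_norm_le (hf.proj t).1 (hf.proj t).2 _)
    linarith
  have hnorm : ‖rbfClm hq s' (S ξ) - rbfClm hq s (S ξ)‖ ^ 2 =
      RCLike.re ⟪A ⟨q s' η, hq.mem_domain s' η⟩ - A ⟨q s η, hq.mem_domain s η⟩,
        A ⟨q s' η, hq.mem_domain s' η⟩ - A ⟨q s η, hq.mem_domain s η⟩⟫ := by
    rw [@inner_self_eq_norm_sq ℂ]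
    rfl
  calc ‖rbfClm hq s' (S ξ) - rbfClm hq s (S ξ)‖ ^ 2
      ≤ ‖q s' wA - q s wA‖ * (2 * ‖wB‖) := by rw [hnorm]; exact hbound
  _ = 2 * ‖wB‖ * ‖q s' wA - q s wA‖ := by ring

theorem rbfClm_mem {A : H →ₗ.[ℂ] H} {q : ℝ → H →L[ℂ] H} (hq : IsRightBoundingFamily A q)
    (M : VonNeumannAlgebra H) (hAaff : Affiliated M A) (s : ℝ) : rbfClm hq s ∈ M := by
  have hqM := hq.mem_vN M hAaff s
  have hcommU : ∀ u ∈ M.commutant, u ∈ unitary (H →L[ℂ] H) → Commute (rbfClm hq s) u := by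
    intro u huc huU
    have haff := hAaff u huc huU
    ext ζ
    show rbfClm hq s (u ζ) = u (rbfClm hq s ζ)
    have hqu : q s (u ζ) = u (q s ζ) := by
      have h := VonNeumannAlgebra.mem_commutant_iff.mp huc (q s) hqM
      exact congrFun (congrArg DFunLike.coe h) ζ
    have h' : u (q s ζ) ∈ A.domain := haff.1 _ (hq.mem_domain s ζ)
    calc rbfClm hq s (u ζ) = A ⟨q s (u ζ), hq.mem_domain s (u ζ)⟩ := rbfClm_apply hq s (u ζ)
    _ = A ⟨u (q s ζ), h'⟩ := s4_pmap_apply_congr hqu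
    _ = u (A ⟨q s ζ, hq.mem_domain s ζ⟩) := haff.2 ⟨q s ζ, hq.mem_domain s ζ⟩ h'
    _ = u (rbfClm hq s ζ) := by rw [rbfClm_apply hq s ζ]
  have h2 := s4_commute_of_commute_unitary M.commutant (rbfClm hq s) hcommU
  rw [← M.commutant_commutant]
  exact VonNeumannAlgebra.mem_commutant_iff.mpr fun g hg => (h2 g hg).symm.eq


/-- Lemma 1.A.5: let `A`, `B` be strongly commuting densely defined closed operators with
right bounding projections `{q s}` (for `A`) and `{f t}` (for `B`). Then for any
`ξ ∈ D(A*A) ∩ D(B*B)` the double limits `lim_{s,t→∞} A q_s B f_t ξ` and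
`lim_{s,t→∞} B f_t A q_s ξ` exist and are equal. -/
theorem stmt4 (A B : H →ₗ.[ℂ] H)
    (hAc : A.IsClosed) (hBc : B.IsClosed)
    (hAd : Dense (A.domain : Set H)) (hBd : Dense (B.domain : Set H))
    (hAB : StronglyCommutes A B)
    (q f : ℝ → H →L[ℂ] H)
    (hq : IsRightBoundingFamily A q) (hf : IsRightBoundingFamily B f)
    (ξ : H) (hξA : ξ ∈ A.domain) (hξB : ξ ∈ B.domain)
    (hAA : A ⟨ξ, hξA⟩ ∈ A.adjoint.domain)   -- `ξ ∈ D(A*A)`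
    (hBB : B ⟨ξ, hξB⟩ ∈ B.adjoint.domain) : -- `ξ ∈ D(B*B)`
    ∃ L : H,
      Tendsto (fun st : ℝ × ℝ =>
        A ⟨q st.1 (B ⟨f st.2 ξ, hf.mem_domain st.2 ξ⟩), hq.mem_domain st.1 _⟩)
        (atTop ×ˢ atTop) (nhds L) ∧
      Tendsto (fun st : ℝ × ℝ =>
        B ⟨f st.2 (A ⟨q st.1 ξ, hq.mem_domain st.1 ξ⟩), hf.mem_domain st.2 _⟩)
        (atTop ×ˢ atTop) (nhds L) := by
  obtain ⟨M, N, hMN, hAaff, hBaff⟩ := hAB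
  have hqM : ∀ s, q s ∈ M := hq.mem_vN M hAaff
  have hfN : ∀ t, f t ∈ N := hf.mem_vN N hBaff
  have hNc : ∀ y ∈ N, y ∈ M.commutant :=
    fun y hy => VonNeumannAlgebra.mem_commutant_iff.mpr fun g hg => (hMN g hg y hy).eq
  have hMc : ∀ x ∈ M, x ∈ N.commutant :=
    fun x hx => VonNeumannAlgebra.mem_commutant_iff.mpr fun g hg => ((hMN x hx g hg).symm).eq
  have hMcA : ∀ x ∈ M.commutant, ∀ ζ (hζ : ζ ∈ A.domain),
      ∃ h : x ζ ∈ A.domain, A ⟨x ζ, h⟩ = x (A ⟨ζ, hζ⟩) := by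
    apply s4_pmap_comm_of_unitary_comm M.commutant A hAc
    intro u huP huU ζ hζ
    exact ⟨(hAaff u huP huU).1 ζ hζ, (hAaff u huP huU).2 ⟨ζ, hζ⟩ _⟩
  have hMcAd : ∀ x ∈ M.commutant, ∀ ζ (hζ : ζ ∈ A.adjoint.domain),
      ∃ h : x ζ ∈ A.adjoint.domain, A.adjoint ⟨x ζ, h⟩ = x (A.adjoint ⟨ζ, hζ⟩) := by
    apply s4_pmap_comm_of_unitary_comm M.commutant A.adjoint (s4_adjoint_isClosed A hAd)
    intro u huP huU
    apply s4_unitary_comm_adjoint hAd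
    intro ζ hζ
    have hstaru : star u ∈ M.commutant := star_mem huP
    have hstaruU : star u ∈ unitary (H →L[ℂ] H) := Unitary.star_mem huU
    exact ⟨(hAaff _ hstaru hstaruU).1 ζ hζ, (hAaff _ hstaru hstaruU).2 ⟨ζ, hζ⟩ _⟩
  have hNcB : ∀ x ∈ N.commutant, ∀ ζ (hζ : ζ ∈ B.domain),
      ∃ h : x ζ ∈ B.domain, B ⟨x ζ, h⟩ = x (B ⟨ζ, hζ⟩) := by
    apply s4_pmap_comm_of_unitary_comm N.commutant B hBc
    intro u huP huU ζ hζ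
    exact ⟨(hBaff u huP huU).1 ζ hζ, (hBaff u huP huU).2 ⟨ζ, hζ⟩ _⟩
  have hNcBd : ∀ x ∈ N.commutant, ∀ ζ (hζ : ζ ∈ B.adjoint.domain),
      ∃ h : x ζ ∈ B.adjoint.domain, B.adjoint ⟨x ζ, h⟩ = x (B.adjoint ⟨ζ, hζ⟩) := by
    apply s4_pmap_comm_of_unitary_comm N.commutant B.adjoint (s4_adjoint_isClosed B hBd)
    intro u huP huU
    apply s4_unitary_comm_adjoint hBd
    intro ζ hζ
    have hstaru : star u ∈ N.commutant := star_mem huP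
    have hstaruU : star u ∈ unitary (H →L[ℂ] H) := Unitary.star_mem huU
    exact ⟨(hBaff _ hstaru hstaruU).1 ζ hζ, (hBaff _ hstaru hstaruU).2 ⟨ζ, hζ⟩ _⟩
  have hTM : ∀ s, rbfClm hq s ∈ M := fun s => rbfClm_mem hq M hAaff s
  have hSN : ∀ t, rbfClm hf t ∈ N := fun t => rbfClm_mem hf N hBaff t
  have hTS : ∀ s t, Commute (rbfClm hq s) (rbfClm hf t) := fun s t => hMN _ (hTM s) _ (hSN t)
  have hqS : ∀ t s, Commute (q s) (rbfClm hf t) := fun t s => hMN _ (hqM s) _ (hSN t)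
  have hqS' : ∀ t s, Commute (q s) (star (rbfClm hf t)) := fun t s =>
    hMN _ (hqM s) _ (star_mem (hSN t))
  have hfT : ∀ s t, Commute (f t) (rbfClm hq s) := fun s t => (hMN _ (hTM s) _ (hfN t)).symm
  have hfT' : ∀ s t, Commute (f t) (star (rbfClm hq s)) := fun s t =>
    (hMN _ (star_mem (hTM s)) _ (hfN t)).symm
  set wA := A.adjoint ⟨A ⟨ξ, hξA⟩, hAA⟩ with hwA
  set wB := B.adjoint ⟨B ⟨ξ, hξB⟩, hBB⟩ with hwB
  have key1 : ∀ s s' t, ‖rbfClm hq s' (rbfClm hf t ξ) - rbfClm hq s (rbfClm hf t ξ)‖ ^ 2 ≤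
      2 * ‖wB‖ * ‖q s' wA - q s wA‖ := fun s s' t =>
    s4_key_bound A B hAd hBd q f hq hf hqS hqS'
      (fun t ζ hζ => hMcA _ (hNc _ (hSN t)) ζ hζ) (fun t ζ hζ => hMcAd _ (hNc _ (hSN t)) ζ hζ)
      ξ hξA hξB hAA hBB s s' t
  have key2 : ∀ t t' s, ‖rbfClm hf t' (rbfClm hq s ξ) - rbfClm hf t (rbfClm hq s ξ)‖ ^ 2 ≤
      2 * ‖wA‖ * ‖f t' wB - f t wB‖ := fun t t' s =>
    s4_key_bound B A hBd hAd f q hf hq hfT hfT'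
      (fun s ζ hζ => hNcB _ (hMc _ (hTM s)) ζ hζ) (fun s ζ hζ => hNcBd _ (hMc _ (hTM s)) ζ hζ)
      ξ hξB hξA hBB hAA t t' s
  set F : ℝ × ℝ → H := fun st => rbfClm hq st.1 (rbfClm hf st.2 ξ) with hF
  have hcomm_pt : ∀ s t, rbfClm hf t (rbfClm hq s ξ) = rbfClm hq s (rbfClm hf t ξ) :=
    fun s t => congrFun (congrArg DFunLike.coe ((hTS s t).symm).eq) ξ
  have hdecomp : ∀ s t s' t', F (s', t') - F (s, t) =
      (rbfClm hq s' (rbfClm hf t' ξ) - rbfClm hq s (rbfClm hf t' ξ)) +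
      (rbfClm hf t' (rbfClm hq s ξ) - rbfClm hf t (rbfClm hq s ξ)) := by
    intro s t s' t'
    rw [hcomm_pt s t', hcomm_pt s t]
    show F (s', t') - F (s, t) = _
    abel
  have hcauchy : CauchySeq F := by
    rw [Metric.cauchySeq_iff]
    intro ε hε
    set C := 2 * ‖wB‖ + 2 * ‖wA‖ + 1 with hC
    have hCpos : 0 < C := by positivity
    set δ := (ε / 4) ^ 2 / C with hδ
    have hδpos : 0 < δ := by positivity
    have hcA : CauchySeq (fun s => q s wA) := (hq.tendsto_one wA).cauchySeq
    have hcB : CauchySeq (fun t => f t wB) := (hf.tendsto_one wB).cauchySeq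
    rw [Metric.cauchySeq_iff] at hcA hcB
    obtain ⟨s₀, hs₀⟩ := hcA δ hδpos
    obtain ⟨t₀, ht₀⟩ := hcB δ hδpos
    refine ⟨(s₀, t₀), ?_⟩
    rintro ⟨s', t'⟩ h' ⟨s, t⟩ h
    have hs'0 : s₀ ≤ s' := h'.1
    have ht'0 : t₀ ≤ t' := h'.2
    have hs0 : s₀ ≤ s := h.1
    have ht0 : t₀ ≤ t := h.2
    have hqd : ‖q s' wA - q s wA‖ < δ := by
      have := hs₀ s' hs'0 s hs0
      rwa [dist_eq_norm] at this
    have hfd : ‖f t' wB - f t wB‖ < δ := by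
      have := ht₀ t' ht'0 t ht0
      rwa [dist_eq_norm] at this
    have hwBnn : (0:ℝ) ≤ ‖wB‖ := norm_nonneg _
    have hwAnn : (0:ℝ) ≤ ‖wA‖ := norm_nonneg _
    have hb1 : ‖rbfClm hq s' (rbfClm hf t' ξ) - rbfClm hq s (rbfClm hf t' ξ)‖ < ε / 4 := by
      refine lt_of_pow_lt_pow_left₀ 2 (by positivity) ?_
      calc ‖rbfClm hq s' (rbfClm hf t' ξ) - rbfClm hq s (rbfClm hf t' ξ)‖ ^ 2
          ≤ 2 * ‖wB‖ * ‖q s' wA - q s wA‖ := key1 s s' t'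
      _ < (ε / 4) ^ 2 := by
          have h1 : 2 * ‖wB‖ * ‖q s' wA - q s wA‖ ≤ 2 * ‖wB‖ * δ := by
            apply mul_le_mul_of_nonneg_left (le_of_lt hqd) (by positivity)
          have h2 : 2 * ‖wB‖ * δ < C * δ := by
            apply mul_lt_mul_of_pos_right _ hδpos
            rw [hC]; linarith
          have h3 : C * δ = (ε / 4) ^ 2 := by
            rw [hδ, mul_comm]; exact div_mul_cancel₀ _ (ne_of_gt hCpos)
          exact lt_of_le_of_lt h1 (lt_of_lt_of_eq h2 h3)
    have hb2 : ‖rbfClm hf t' (rbfClm hq s ξ) - rbfClm hf t (rbfClm hq s ξ)‖ < ε / 4 := by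
      refine lt_of_pow_lt_pow_left₀ 2 (by positivity) ?_
      calc ‖rbfClm hf t' (rbfClm hq s ξ) - rbfClm hf t (rbfClm hq s ξ)‖ ^ 2
          ≤ 2 * ‖wA‖ * ‖f t' wB - f t wB‖ := key2 t t' s
      _ < (ε / 4) ^ 2 := by
          have h1 : 2 * ‖wA‖ * ‖f t' wB - f t wB‖ ≤ 2 * ‖wA‖ * δ := by
            apply mul_le_mul_of_nonneg_left (le_of_lt hfd) (by positivity)
          have h2 : 2 * ‖wA‖ * δ < C * δ := by
            apply mul_lt_mul_of_pos_right _ hδpos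
            rw [hC]; linarith
          have h3 : C * δ = (ε / 4) ^ 2 := by
            rw [hδ, mul_comm]; exact div_mul_cancel₀ _ (ne_of_gt hCpos)
          exact lt_of_le_of_lt h1 (lt_of_lt_of_eq h2 h3)
    calc dist (F (s', t')) (F (s, t)) = ‖F (s', t') - F (s, t)‖ := dist_eq_norm _ _
    _ ≤ ‖rbfClm hq s' (rbfClm hf t' ξ) - rbfClm hq s (rbfClm hf t' ξ)‖ +
        ‖rbfClm hf t' (rbfClm hq s ξ) - rbfClm hf t (rbfClm hq s ξ)‖ := by
          rw [hdecomp s t s' t']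
          exact norm_add_le _ _
    _ < ε := by linarith
  obtain ⟨L, hL⟩ := cauchySeq_tendsto_of_complete hcauchy
  have hL' : Tendsto F (atTop ×ˢ atTop) (𝓝 L) := by
    rw [prod_atTop_atTop_eq]
    exact hL
  refine ⟨L, ?_, ?_⟩
  · have hfun : (fun st : ℝ × ℝ =>
        A ⟨q st.1 (B ⟨f st.2 ξ, hf.mem_domain st.2 ξ⟩), hq.mem_domain st.1 _⟩) = F := by
      funext st
      show _ = rbfClm hq st.1 (rbfClm hf st.2 ξ)
      rw [rbfClm_apply hq st.1, rbfClm_apply hf st.2]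
    rw [hfun]
    exact hL'
  · have hfun : (fun st : ℝ × ℝ =>
        B ⟨f st.2 (A ⟨q st.1 ξ, hq.mem_domain st.1 ξ⟩), hf.mem_domain st.2 _⟩) = F := by
      funext st
      show _ = rbfClm hq st.1 (rbfClm hf st.2 ξ)
      rw [← hcomm_pt st.1 st.2, rbfClm_apply hf st.2, rbfClm_apply hq st.1]
    rw [hfun]
    exact hL'
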